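/- arXiv:2605.08737 — 2 statements merged into one kernel-verified Lean document; each statement's English description precedes it below -/
import Mathlib

section
/- Fix b ∈ (0,1) and c > 1. The clip-safe threshold is strictly decreasing in the teacher modal probability: the map p ↦ λ*(p,b,c) is strictly antitone on the interval (max(1/2,b), 1). In particular, at b = 1/2 the derivative of p ↦ λ*(p,1/2,c) is strictly negative for every p ∈ (1/2,1). -/
open Real

/-- Closed-form clip-safe threshold `λ*(p,b,c)`. -/
noncomputable def lamStar (p b c : ℝ) : ℝ :=
  (Real.log ((1 - p) / (c - 1 + p)) - Real.log ((1 - b) / b)) /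
    (Real.log ((1 - p) / p) - Real.log ((1 - b) / b))

/-- Key lemma: at any `p` with `max(1/2,b) < p < 1`, the map `x ↦ λ*(x,b,c)` has a
strictly negative derivative. -/
lemma lamStar_key (b c : ℝ) (hb0 : 0 < b) (hb1 : b < 1) (hc : 1 < c)
    (p : ℝ) (hp2 : 1 / 2 < p) (hpb : b < p) (hp1 : p < 1) :
    ∃ d, HasDerivAt (fun x => lamStar x b c) d p ∧ d < 0 := by
  have hp0 : 0 < p := by linarith
  have h1p : 0 < 1 - p := by linarith
  have hcp : 0 < c - 1 + p := by linarith
  set L : ℝ := Real.log ((1 - b) / b) with hL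
  set n' : ℝ := (-1) / (1 - p) - 1 / (c - 1 + p) with hn'
  set g' : ℝ := (-1) / (1 - p) - 1 / p with hg'def
  set n : ℝ := Real.log (1 - p) - Real.log (c - 1 + p) - L with hn
  set g : ℝ := Real.log (1 - p) - Real.log p - L with hgdef
  have hg : g < 0 := by
    have hq : (1 - p) / p < (1 - b) / b := by
      rw [div_lt_div_iff₀ hp0 hb0]; nlinarith
    have hlt : Real.log ((1 - p) / p) < L := Real.log_lt_log (div_pos h1p hp0) hq
    rw [Real.log_div h1p.ne' hp0.ne'] at hlt
    rw [hgdef]; linarith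
  have hgne : g ≠ 0 := hg.ne
  -- derivatives of numerator and denominator
  have hA : HasDerivAt (fun x : ℝ => (1 : ℝ) - x) (-1) p := by
    simpa using (hasDerivAt_id p).const_sub 1
  have hlogA : HasDerivAt (fun x : ℝ => Real.log (1 - x)) ((-1) / (1 - p)) p :=
    hA.log h1p.ne'
  have hB : HasDerivAt (fun x : ℝ => c - 1 + x) 1 p := by
    simpa using (hasDerivAt_id p).const_add (c - 1)
  have hlogB : HasDerivAt (fun x : ℝ => Real.log (c - 1 + x)) (1 / (c - 1 + p)) p :=
    hB.log hcp.ne'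
  have hlogC : HasDerivAt (fun x : ℝ => Real.log x) (1 / p) p := by
    simpa [one_div] using Real.hasDerivAt_log hp0.ne'
  have hN : HasDerivAt (fun x : ℝ => Real.log (1 - x) - Real.log (c - 1 + x) - L) n' p :=
    (hlogA.sub hlogB).sub_const L
  have hG : HasDerivAt (fun x : ℝ => Real.log (1 - x) - Real.log x - L) g' p :=
    (hlogA.sub hlogC).sub_const L
  have hFD : HasDerivAt
      (fun x : ℝ => (Real.log (1 - x) - Real.log (c - 1 + x) - L) /
        (Real.log (1 - x) - Real.log x - L)) ((n' * g - n * g') / g ^ 2) p :=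
    hN.div hG hgne
  have heq : (fun x : ℝ => lamStar x b c) =ᶠ[nhds p]
      (fun x : ℝ => (Real.log (1 - x) - Real.log (c - 1 + x) - L) /
        (Real.log (1 - x) - Real.log x - L)) := by
    filter_upwards [isOpen_Ioo.mem_nhds (show p ∈ Set.Ioo (1 / 2 : ℝ) 1 from ⟨hp2, hp1⟩)]
      with x hx
    have hx0 : (0 : ℝ) < x := by have := hx.1; linarith
    have hx1 : (0 : ℝ) < 1 - x := by have := hx.2; linarith
    have hxc : (0 : ℝ) < c - 1 + x := by linarith
    unfold lamStar
    rw [Real.log_div hx1.ne' hxc.ne', Real.log_div hx1.ne' hx0.ne']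
  have hDeriv : HasDerivAt (fun x : ℝ => lamStar x b c) ((n' * g - n * g') / g ^ 2) p :=
    hFD.congr_of_eventuallyEq heq
  refine ⟨_, hDeriv, ?_⟩
  -- sign analysis
  have hm : Real.log p - Real.log (c - 1 + p) < 0 :=
    sub_neg.mpr (Real.log_lt_log hp0 (by linarith))
  have hm' : (0 : ℝ) < 1 / p - 1 / (c - 1 + p) :=
    sub_pos.mpr (one_div_lt_one_div_of_lt hp0 (by linarith))
  have hg'neg : g' < 0 := by
    have h1 : (-1 : ℝ) / (1 - p) < 0 := div_neg_of_neg_of_pos (by norm_num) h1p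
    have h2 : (0 : ℝ) < 1 / p := by positivity
    rw [hg'def]; linarith
  have hnum : n' * g - n * g' < 0 := by
    have key : n' * g - n * g' =
        (1 / p - 1 / (c - 1 + p)) * g - (Real.log p - Real.log (c - 1 + p)) * g' := by
      rw [hn', hn, hgdef, hg'def]; ring
    rw [key]
    clear_value n n' g g' L
    have h1 := mul_neg_of_pos_of_neg hm' hg
    have h2 := mul_pos_of_neg_of_neg hm hg'neg
    linarith
  exact div_neg_of_neg_of_pos hnum (pow_two_pos_of_ne_zero hgne)

/-- the clip-safe threshold is strictly decreasing in the teacher modal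
probability: `p ↦ λ*(p,b,c)` is strictly antitone on `(max(1/2,b), 1)`; and at
`b = 1/2` its derivative is strictly negative for every `p ∈ (1/2,1)`. -/
theorem lamStar_strictAntiOn
    (b c : ℝ) (hb0 : 0 < b) (hb1 : b < 1) (hc : 1 < c) :
    StrictAntiOn (fun p : ℝ => lamStar p b c) (Set.Ioo (max (1 / 2) b) 1) ∧
      (∀ p : ℝ, 1 / 2 < p → p < 1 →
        deriv (fun x : ℝ => lamStar x (1 / 2) c) p < 0) := by
  constructor
  · apply strictAntiOn_of_deriv_neg (convex_Ioo _ _)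
    · intro x hx
      obtain ⟨d, hd, -⟩ := lamStar_key b c hb0 hb1 hc x
        (lt_of_le_of_lt (le_max_left _ _) hx.1)
        (lt_of_le_of_lt (le_max_right _ _) hx.1) hx.2
      exact hd.continuousAt.continuousWithinAt
    · intro x hx
      rw [interior_Ioo] at hx
      obtain ⟨d, hd, hdn⟩ := lamStar_key b c hb0 hb1 hc x
        (lt_of_le_of_lt (le_max_left _ _) hx.1)
        (lt_of_le_of_lt (le_max_right _ _) hx.1) hx.2
      rw [hd.deriv]; exact hdn
  · intro p hp2 hp1
    obtain ⟨d, hd, hdn⟩ := lamStar_key (1 / 2) c (by norm_num) (by norm_num) hc p hp2 hp2 hp1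
    rw [hd.deriv]; exact hdn
end

section
/- Let b ∈ (0,1), c > 1, and let (p_t)_{t ∈ S} be a finite nonempty family of structural-position modal probabilities with b < p_t and 1/2 < p_t < 1 for every t. Let p_safe ∈ (max(1/2,b), 1) satisfy p_safe ≥ p_t for all t. If λ < λ*(p_safe, b, c), then every structural position is clip-safe: for every t ∈ S, the sharpened probability formed from p_t satisfies p_λ^{(b)}(p_t) < 1 − (1−p_t)/c. -/
open Real

/-- Base-relative sharpened probability `p_λ^{(b)}` at a position with teacher modal
probability `p`. -/
noncomputable def pLam (p b lam : ℝ) : ℝ :=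
  (b ^ (1 - lam) * p ^ lam) / (b ^ (1 - lam) * p ^ lam + (1 - b) ^ (1 - lam) * (1 - p) ^ lam)

lemma safety_of_lt_lamStar (p b c lam : ℝ) (hb0 : 0 < b) (hb1 : b < 1) (hc : 1 < c)
    (hbp : b < p) (hp2 : 1 / 2 < p) (hp1 : p < 1) (hlam : lam < lamStar p b c) :
    pLam p b lam < 1 - (1 - p) / c := by
  have hp0 : 0 < p := by linarith
  have h1p : 0 < 1 - p := by linarith
  have h1b : 0 < 1 - b := by linarith
  have hcp : 0 < c - 1 + p := by linarith
  have hc0 : (0:ℝ) < c := by linarith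
  set X := b ^ (1 - lam) * p ^ lam with hXdef
  set Y := (1 - b) ^ (1 - lam) * (1 - p) ^ lam with hYdef
  have hX : 0 < X := mul_pos (Real.rpow_pos_of_pos hb0 _) (Real.rpow_pos_of_pos hp0 _)
  have hY : 0 < Y := mul_pos (Real.rpow_pos_of_pos h1b _) (Real.rpow_pos_of_pos h1p _)
  -- translate the lamStar condition
  have hBA : Real.log ((1 - p) / p) - Real.log ((1 - b) / b) < 0 := by
    have hlt : (1 - p) / p < (1 - b) / b := by
      rw [div_lt_div_iff₀ hp0 hb0]; nlinarith
    have := Real.log_lt_log (div_pos h1p hp0) hlt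
    linarith
  have hkey : Real.log ((1 - p) / (c - 1 + p)) - Real.log ((1 - b) / b)
      < lam * (Real.log ((1 - p) / p) - Real.log ((1 - b) / b)) := by
    exact (lt_div_iff_of_neg hBA).mp hlam
  -- exponentiate
  have hexp : (1 - p) / (c - 1 + p)
      < ((1 - b) / b) ^ (1 - lam) * ((1 - p) / p) ^ lam := by
    have h2 : Real.log ((1 - p) / (c - 1 + p))
        < (1 - lam) * Real.log ((1 - b) / b) + lam * Real.log ((1 - p) / p) := by
      nlinarith [hkey]
    have h3 := Real.exp_lt_exp.mpr h2
    rw [Real.exp_log (div_pos h1p hcp)] at h3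
    rw [Real.exp_add] at h3
    rw [Real.rpow_def_of_pos (div_pos h1b hb0), Real.rpow_def_of_pos (div_pos h1p hp0)]
    calc (1 - p) / (c - 1 + p)
        < Real.exp ((1 - lam) * Real.log ((1 - b) / b)) *
            Real.exp (lam * Real.log ((1 - p) / p)) := h3
      _ = Real.exp (Real.log ((1 - b) / b) * (1 - lam)) *
            Real.exp (Real.log ((1 - p) / p) * lam) := by ring_nf
  have hfrac : ((1 - b) / b) ^ (1 - lam) * ((1 - p) / p) ^ lam = Y / X := by
    rw [Real.div_rpow (le_of_lt h1b) (le_of_lt hb0),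
        Real.div_rpow (le_of_lt h1p) (le_of_lt hp0)]
    rw [hXdef, hYdef]
    field_simp
  rw [hfrac] at hexp
  -- main inequality: (1-p) * X < (c-1+p) * Y
  have hK : (1 - p) * X < (c - 1 + p) * Y := by
    rw [div_lt_div_iff₀ hcp hX] at hexp
    linarith [hexp]
  have hXY : 0 < X + Y := by linarith
  have hq : 1 - (1 - p) / c = (c - 1 + p) / c := by field_simp; ring
  rw [pLam, ← hXdef, ← hYdef, hq, div_lt_div_iff₀ hXY hc0]
  nlinarith [hK]

lemma lamStar_anti (p p' b c : ℝ) (hb0 : 0 < b) (hb1 : b < 1) (hc : 1 < c)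
    (hbp : b < p) (hp2 : 1 / 2 < p) (hp1' : p' < 1) (hpp : p ≤ p') (hbp' : b < p') :
    lamStar p' b c ≤ lamStar p b c := by
  have hp0 : 0 < p := by linarith
  have hp0' : 0 < p' := by linarith
  have hp1 : p < 1 := by linarith
  have h1p : 0 < 1 - p := by linarith
  have h1p' : 0 < 1 - p' := by linarith
  have h1b : 0 < 1 - b := by linarith
  have hcp : 0 < c - 1 + p := by linarith
  have hcp' : 0 < c - 1 + p' := by linarith
  have hBA : ∀ q : ℝ, 0 < q → b < q → q < 1 →
      0 < Real.log ((1 - b) / b) - Real.log ((1 - q) / q) := by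
    intro q hq0 hbq hq1
    have hlt : (1 - q) / q < (1 - b) / b := by
      rw [div_lt_div_iff₀ hq0 hb0]; nlinarith
    have := Real.log_lt_log (div_pos (by linarith) hq0) hlt
    linarith
  have hBAp := hBA p hp0 hbp hp1
  have hBAp' := hBA p' hp0' hbp' hp1'
  -- rewrite lamStar as 1 + N/(A - B)
  have hform : ∀ q : ℝ, 0 < q → b < q → q < 1 →
      lamStar q b c = 1 + (Real.log (c - 1 + q) - Real.log q) /
        (Real.log ((1 - b) / b) - Real.log ((1 - q) / q)) := by
    intro q hq0 hbq hq1
    have hne : Real.log ((1 - b) / b) - Real.log ((1 - q) / q) ≠ 0 :=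
      ne_of_gt (hBA q hq0 hbq hq1)
    have hcq : (0:ℝ) < c - 1 + q := by linarith
    unfold lamStar
    rw [Real.log_div (by linarith : (1:ℝ) - q ≠ 0) (ne_of_gt hcq),
        Real.log_div (by linarith : (1:ℝ) - q ≠ 0) (ne_of_gt hq0)]
    rw [Real.log_div (by linarith : (1:ℝ) - q ≠ 0) (ne_of_gt hq0)] at hne
    set A := Real.log ((1 - b) / b) with hA
    set L1 := Real.log (1 - q)
    set L2 := Real.log (c - 1 + q)
    set L3 := Real.log q
    have hne2 : L1 - L3 - A ≠ 0 := fun h => hne (by linarith)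
    field_simp
    ring
  rw [hform p hp0 hbp hp1, hform p' hp0' hbp' hp1']
  have hNpos' : 0 ≤ Real.log (c - 1 + p') - Real.log p' := by
    have := Real.log_le_log hp0' (by linarith : p' ≤ c - 1 + p')
    linarith
  have hNle : Real.log (c - 1 + p') - Real.log p' ≤ Real.log (c - 1 + p) - Real.log p := by
    have hm : (c - 1 + p') * p ≤ (c - 1 + p) * p' := by nlinarith
    have := Real.log_le_log (mul_pos hcp' hp0) hm
    rw [Real.log_mul (ne_of_gt hcp') (ne_of_gt hp0),
        Real.log_mul (ne_of_gt hcp) (ne_of_gt hp0')] at this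
    linarith
  have hDle : Real.log ((1 - b) / b) - Real.log ((1 - p) / p)
      ≤ Real.log ((1 - b) / b) - Real.log ((1 - p') / p') := by
    have hlt : (1 - p') / p' ≤ (1 - p) / p := by
      rw [div_le_div_iff₀ hp0' hp0]; nlinarith
    have := Real.log_le_log (div_pos h1p' hp0') hlt
    linarith
  have hdiv : (Real.log (c - 1 + p') - Real.log p') /
        (Real.log ((1 - b) / b) - Real.log ((1 - p') / p'))
      ≤ (Real.log (c - 1 + p) - Real.log p) /
        (Real.log ((1 - b) / b) - Real.log ((1 - p) / p)) :=
    div_le_div₀ (by linarith) hNle hBAp hDle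
  linarith

/-- sequence-level provable safety: if `p_safe` upper-bounds every
structural-position modal probability and `λ < λ*(p_safe, b, c)`, then every
structural position is clip-safe: `p_λ^{(b)}(p_t) < 1 − (1−p_t)/c` for all `t`. -/
theorem sequence_level_safety
    {S : Type*} [Fintype S] [Nonempty S]
    (b c : ℝ) (hb0 : 0 < b) (hb1 : b < 1) (hc : 1 < c)
    (pt : S → ℝ)
    (hpt : ∀ t, b < pt t ∧ 1 / 2 < pt t ∧ pt t < 1)
    (pSafe : ℝ) (hps : pSafe ∈ Set.Ioo (max (1 / 2) b) 1)
    (hbound : ∀ t, pt t ≤ pSafe)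
    (lam : ℝ) (hlam : lam < lamStar pSafe b c) :
    ∀ t, pLam (pt t) b lam < 1 - (1 - pt t) / c := by
  intro t
  obtain ⟨hbpt, hpt2, hpt1⟩ := hpt t
  obtain ⟨hps0, hps1⟩ := hps
  have hbs : b < pSafe := lt_of_le_of_lt (le_max_right _ _) hps0
  have hlam' : lam < lamStar (pt t) b c :=
    lt_of_lt_of_le hlam
      (lamStar_anti (pt t) pSafe b c hb0 hb1 hc hbpt hpt2 hps1 (hbound t) hbs)
  exact safety_of_lt_lamStar (pt t) b c lam hb0 hb1 hc hbpt hpt2 hpt1 hlam'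
end
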